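/- Let T ≥ 1/π and define the periodic Gaussian Φ_T(x) = (1/Z)·Σ_{j∈ℤ} exp(-(x+2jπ)²T²/2), where Z = Σ_{j∈ℤ} exp(-(2jπ)²T²/2). Then Φ_T is convex on the interval [1/T, 2π - 1/T]. -/

import Mathlib

open Real

noncomputable def periodicGaussian (T : ℝ) (x : ℝ) : ℝ :=
  (∑' j : ℤ, Real.exp (-(x + 2 * j * π) ^ 2 * T ^ 2 / 2)) /
  (∑' j : ℤ, Real.exp (-(2 * j * π) ^ 2 * T ^ 2 / 2))

section aux

lemma hasDerivAt_gauss (T c x : ℝ) :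
    HasDerivAt (fun x => Real.exp (-(x + c) ^ 2 * T ^ 2 / 2))
      (-(x + c) * T ^ 2 * Real.exp (-(x + c) ^ 2 * T ^ 2 / 2)) x := by
  have h0 : HasDerivAt (fun x : ℝ => x + c) 1 x := (hasDerivAt_id x).add_const c
  have h1 : HasDerivAt (fun x : ℝ => -(x + c) ^ 2 * T ^ 2 / 2) (-(x + c) * T ^ 2) x := by
    have h2 := ((h0.pow 2).neg.mul_const (T ^ 2)).div_const 2
    exact h2.congr_deriv (by ring)
  have := h1.exp
  convert this using 1; ring

lemma deriv_gauss (T c : ℝ) :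
    deriv (fun x => Real.exp (-(x + c) ^ 2 * T ^ 2 / 2)) =
      fun x => -(x + c) * T ^ 2 * Real.exp (-(x + c) ^ 2 * T ^ 2 / 2) := by
  funext x; exact (hasDerivAt_gauss T c x).deriv

lemma hasDerivAt_gauss' (T c x : ℝ) :
    HasDerivAt (fun x => -(x + c) * T ^ 2 * Real.exp (-(x + c) ^ 2 * T ^ 2 / 2))
      (((x + c) ^ 2 * T ^ 2 - 1) * T ^ 2 * Real.exp (-(x + c) ^ 2 * T ^ 2 / 2)) x := by
  have h0 : HasDerivAt (fun x : ℝ => -(x + c) * T ^ 2) (-T ^ 2) x := by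
    have := (((hasDerivAt_id x).add_const c).neg).mul_const (T ^ 2)
    exact this.congr_deriv (by ring)
  have := h0.mul (hasDerivAt_gauss T c x)
  exact this.congr_deriv (by ring)

lemma convexOn_gauss {T a b c : ℝ}
    (h : ∀ x ∈ Set.Icc a b, 1 ≤ (x + c) ^ 2 * T ^ 2) :
    ConvexOn ℝ (Set.Icc a b) (fun x => Real.exp (-(x + c) ^ 2 * T ^ 2 / 2)) := by
  apply convexOn_of_deriv2_nonneg' (convex_Icc a b)
  · exact fun x _ => (hasDerivAt_gauss T c x).differentiableAt.differentiableWithinAt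
  · intro x _
    rw [deriv_gauss]
    exact (hasDerivAt_gauss' T c x).differentiableAt.differentiableWithinAt
  · intro x hx
    have : deriv^[2] (fun x => Real.exp (-(x + c) ^ 2 * T ^ 2 / 2)) x =
        ((x + c) ^ 2 * T ^ 2 - 1) * T ^ 2 * Real.exp (-(x + c) ^ 2 * T ^ 2 / 2) := by
      show deriv (deriv _) x = _
      rw [deriv_gauss]
      exact (hasDerivAt_gauss' T c x).deriv
    rw [this]
    have h1 : (0:ℝ) ≤ (x + c) ^ 2 * T ^ 2 - 1 := by linarith [h x hx]
    positivity

lemma summable_nat_gauss {T y : ℝ} (hT : 0 < T) (hy : 0 ≤ y) :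
    Summable (fun n : ℕ => Real.exp (-(y + 2 * n * π) ^ 2 * T ^ 2 / 2)) := by
  have hr : Real.exp (-(T ^ 2 / 2)) < 1 := by
    have h2 : (0:ℝ) < T ^ 2 / 2 := by positivity
    rw [Real.exp_lt_one_iff]; linarith
  refine Summable.of_nonneg_of_le (fun n => (Real.exp_pos _).le) (fun n => ?_)
    (summable_geometric_of_lt_one (Real.exp_pos _).le hr)
  rw [← Real.exp_nat_mul]
  apply Real.exp_le_exp.2
  have hn : (n : ℝ) ≤ (n : ℝ) ^ 2 := by
    exact_mod_cast Nat.le_self_pow two_ne_zero n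
  have hpi : (3:ℝ) < π := pi_gt_three
  have h1 : (n : ℝ) ≤ (y + 2 * n * π) ^ 2 := by
    have h9 : (9:ℝ) ≤ π ^ 2 := by nlinarith
    have hn0 : (0:ℝ) ≤ (n:ℝ) := Nat.cast_nonneg n
    have key : (n : ℝ) ≤ 4 * π ^ 2 * (n:ℝ) ^ 2 := by nlinarith
    have hcross : 0 ≤ y * (2 * (n:ℝ) * π) := by positivity
    nlinarith [sq_nonneg y]
  have hT2 : (0:ℝ) < T ^ 2 := by positivity
  nlinarith

lemma summable_int_gauss {T x : ℝ} (hT : 0 < T) (hx0 : 0 ≤ x) (hx2 : x ≤ 2 * π) :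
    Summable (fun j : ℤ => Real.exp (-(x + 2 * j * π) ^ 2 * T ^ 2 / 2)) := by
  apply Summable.of_nat_of_neg
  · have := summable_nat_gauss hT hx0
    apply this.congr
    intro n; push_cast; ring_nf
  · rw [← (summable_nat_add_iff 1)]
    have h2 : (0:ℝ) ≤ 2 * π - x := by linarith
    have := summable_nat_gauss hT h2
    apply this.congr
    intro n
    congr 1
    push_cast
    ring_nf

end aux

theorem stmt_1 (T : ℝ) (hT : 1 / π ≤ T) :
    ConvexOn ℝ (Set.Icc (1 / T) (2 * π - 1 / T)) (periodicGaussian T) := by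
  have hpi : (0:ℝ) < π := pi_pos
  have hTpos : 0 < T := lt_of_lt_of_le (by positivity) hT
  have hTinv : 1 / T ≤ π := by
    have := one_div_le_one_div_of_le (by positivity : (0:ℝ) < 1 / π) hT
    rwa [one_div_one_div] at this
  set s := Set.Icc (1 / T) (2 * π - 1 / T) with hs
  have hsub : ∀ x ∈ s, 0 ≤ x ∧ x ≤ 2 * π := by
    intro x hx
    obtain ⟨h1, h2⟩ := hx
    constructor
    · have : (0:ℝ) < 1 / T := by positivity
      linarith
    · have : (0:ℝ) < 1 / T := by positivity
      linarith
  -- convexity of each term on s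
  have hterm : ∀ j : ℤ, ConvexOn ℝ s
      (fun x => Real.exp (-(x + 2 * j * π) ^ 2 * T ^ 2 / 2)) := by
    intro j
    apply convexOn_gauss
    intro x hx
    obtain ⟨h1, h2⟩ := hx
    have hT1 : 0 < 1 / T := by positivity
    rcases le_or_gt 0 (j : ℝ) with hj | hj
    · have : 1 / T ≤ x + 2 * j * π := by nlinarith
      have h1T : 1 / T * (1 / T) ≤ (x + 2 * j * π) ^ 2 := by nlinarith
      calc (1:ℝ) = (1 / T) * (1 / T) * T ^ 2 := by field_simp
      _ ≤ (x + 2 * j * π) ^ 2 * T ^ 2 := by nlinarith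
    · have hj' : (j : ℝ) ≤ -1 := by
        have hjz : j < 0 := by exact_mod_cast hj
        have : j ≤ -1 := by omega
        exact_mod_cast this
      have : x + 2 * j * π ≤ -(1 / T) := by nlinarith
      have h1T : 1 / T * (1 / T) ≤ (x + 2 * j * π) ^ 2 := by nlinarith
      calc (1:ℝ) = (1 / T) * (1 / T) * T ^ 2 := by field_simp
      _ ≤ (x + 2 * j * π) ^ 2 * T ^ 2 := by nlinarith
  -- summability at points of s
  have hsum : ∀ x ∈ s, Summable (fun j : ℤ => Real.exp (-(x + 2 * j * π) ^ 2 * T ^ 2 / 2)) := by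
    intro x hx
    obtain ⟨h0, h2⟩ := hsub x hx
    exact summable_int_gauss hTpos h0 h2
  -- convexity of the numerator
  have hF : ConvexOn ℝ s (fun x => ∑' j : ℤ, Real.exp (-(x + 2 * j * π) ^ 2 * T ^ 2 / 2)) := by
    refine ⟨convex_Icc _ _, ?_⟩
    intro x hx y hy a b ha hb hab
    have hxy : a • x + b • y ∈ s := (convex_Icc _ _) hx hy ha hb hab
    have key : ∀ j : ℤ,
        Real.exp (-((a • x + b • y) + 2 * j * π) ^ 2 * T ^ 2 / 2) ≤
        a * Real.exp (-(x + 2 * j * π) ^ 2 * T ^ 2 / 2) +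
        b * Real.exp (-(y + 2 * j * π) ^ 2 * T ^ 2 / 2) := by
      intro j
      exact (hterm j).2 hx hy ha hb hab
    calc (∑' j : ℤ, Real.exp (-((a • x + b • y) + 2 * j * π) ^ 2 * T ^ 2 / 2))
        ≤ ∑' j : ℤ, (a * Real.exp (-(x + 2 * j * π) ^ 2 * T ^ 2 / 2) +
            b * Real.exp (-(y + 2 * j * π) ^ 2 * T ^ 2 / 2)) := by
          apply Summable.tsum_le_tsum key (hsum _ hxy)
          exact ((hsum x hx).mul_left a).add ((hsum y hy).mul_left b)
      _ = a • (∑' j : ℤ, Real.exp (-(x + 2 * j * π) ^ 2 * T ^ 2 / 2)) +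
          b • (∑' j : ℤ, Real.exp (-(y + 2 * j * π) ^ 2 * T ^ 2 / 2)) := by
          rw [Summable.tsum_add ((hsum x hx).mul_left a) ((hsum y hy).mul_left b),
            tsum_mul_left, tsum_mul_left]
          simp [smul_eq_mul]
  -- denominator is a positive constant
  set Z := ∑' j : ℤ, Real.exp (-(2 * j * π) ^ 2 * T ^ 2 / 2) with hZ
  have hZsum : Summable (fun j : ℤ => Real.exp (-((0:ℝ) + 2 * j * π) ^ 2 * T ^ 2 / 2)) :=
    summable_int_gauss hTpos le_rfl (by positivity)
  have hZsum' : Summable (fun j : ℤ => Real.exp (-(2 * j * π) ^ 2 * T ^ 2 / 2)) := by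
    apply hZsum.congr; intro j; rw [zero_add]
  have hZpos : 0 < Z := by
    rw [hZ]
    exact Summable.tsum_pos hZsum' (fun j => (Real.exp_pos _).le) 0 (Real.exp_pos _)
  have : periodicGaussian T = fun x =>
      Z⁻¹ • (∑' j : ℤ, Real.exp (-(x + 2 * j * π) ^ 2 * T ^ 2 / 2)) := by
    funext x
    rw [periodicGaussian, smul_eq_mul, inv_mul_eq_div]
  rw [this]
  exact hF.smul (by positivity)
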